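/- Let L be a Lie algebra over ℝ, finite-dimensional with a basis b : Basis (Fin n) ℝ L, and carrying the canonical topology of a finite-dimensional real vector space. Let c i j k := (b.repr ⁅b i, b j⁆) k be its structure constants and let α : Fin n → ℤ. For ε > 0 let U ε be the linear automorphism of L with U ε (b i) = ε^(α i) • b i. Then: (1) the limit as ε → 0⁺ (along 𝓝[>] 0) of (U ε)⁻¹ ⁅U ε x, U ε y⁆ exists for all x, y ∈ L if and only if for all i, j, k, c i j k ≠ 0 implies α k ≤ α i + α j; and (2) in that case, the limit defines a bilinear map μ₀ : L →ₗ[ℝ] L →ₗ[ℝ] L which is antisymmetric, satisfies the Jacobi identity, and whose structure constants are (b.repr (μ₀ (b i) (b j))) k = c i j k when α i + α j = α k and 0 otherwise. -/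

import Mathlib

open Filter

lemma IW_zpow_tendsto_aux {m : ℤ} (hm : 0 ≤ m) :
    Tendsto (fun ε : ℝ => ε ^ m) (nhdsWithin 0 (Set.Ioi 0))
      (nhds (if m = 0 then 1 else 0)) := by
  by_cases h : m = 0
  · simpa [h] using (tendsto_const_nhds :
      Tendsto (fun _ : ℝ => (1 : ℝ)) (nhdsWithin 0 (Set.Ioi 0)) (nhds 1))
  · have hnat : m.toNat ≠ 0 := by omega
    have hfun : (fun ε : ℝ => ε ^ m) = fun ε : ℝ => ε ^ m.toNat := by
      funext ε; rw [← zpow_natCast, Int.toNat_of_nonneg hm]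
    have h1 : Tendsto (fun ε : ℝ => ε ^ m.toNat) (nhdsWithin 0 (Set.Ioi 0)) (nhds 0) := by
      have h2 := (continuous_pow m.toNat).tendsto (0 : ℝ)
      rw [zero_pow hnat] at h2
      exact tendsto_nhdsWithin_of_tendsto_nhds h2
    simpa [h, hfun] using h1

lemma IW_no_limit_aux {m : ℤ} (hm : m < 0) {a r : ℝ} (ha : a ≠ 0)
    (h : Tendsto (fun ε : ℝ => ε ^ m * a) (nhdsWithin 0 (Set.Ioi 0)) (nhds r)) : False := by
  have h2 : Tendsto (fun ε : ℝ => ε ^ (-m)) (nhdsWithin 0 (Set.Ioi 0)) (nhds 0) := by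
    have := IW_zpow_tendsto_aux (m := -m) (by omega)
    simpa [show ¬(-m = 0) by omega] using this
  have h3 := h2.mul h
  rw [zero_mul] at h3
  have h4 : (fun ε : ℝ => ε ^ (-m) * (ε ^ m * a)) =ᶠ[nhdsWithin 0 (Set.Ioi 0)]
      fun _ => a := by
    filter_upwards [self_mem_nhdsWithin] with ε hε
    rw [← mul_assoc, ← zpow_add₀ (ne_of_gt (show (0:ℝ) < ε from hε))]
    simp
  exact ha (tendsto_nhds_unique tendsto_const_nhds (h3.congr' h4))

/-- Criterion for existence and form of a generalized Inönü–Wigner contraction with contraction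
matrix `diag(ε^(α 1), …, ε^(α n))` in the basis `b`. -/
theorem generalized_IW_contraction_criterion {n : ℕ} {L : Type*} [LieRing L] [LieAlgebra ℝ L]
    [TopologicalSpace L] [IsTopologicalAddGroup L] [ContinuousSMul ℝ L] [T2Space L]
    (b : Module.Basis (Fin n) ℝ L) (α : Fin n → ℤ)
    (c : Fin n → Fin n → Fin n → ℝ) (hc : ∀ i j k, c i j k = b.repr ⁅b i, b j⁆ k)
    (U : ℝ → (L ≃ₗ[ℝ] L)) (hU : ∀ ε : ℝ, 0 < ε → ∀ i, U ε (b i) = ε ^ (α i) • b i) :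
    ((∀ x y : L, ∃ z : L,
        Tendsto (fun ε => (U ε).symm ⁅U ε x, U ε y⁆) (nhdsWithin 0 (Set.Ioi 0)) (nhds z)) ↔
      (∀ i j k, c i j k ≠ 0 → α k ≤ α i + α j)) ∧
    ((∀ i j k, c i j k ≠ 0 → α k ≤ α i + α j) →
      ∃ μ₀ : L →ₗ[ℝ] L →ₗ[ℝ] L,
        (∀ x y : L,
          Tendsto (fun ε => (U ε).symm ⁅U ε x, U ε y⁆) (nhdsWithin 0 (Set.Ioi 0))
            (nhds (μ₀ x y))) ∧
        (∀ x y : L, μ₀ x y = - μ₀ y x) ∧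
        (∀ x y z : L, μ₀ (μ₀ x y) z + μ₀ (μ₀ y z) x + μ₀ (μ₀ z x) y = 0) ∧
        (∀ i j k, b.repr (μ₀ (b i) (b j)) k = if α i + α j = α k then c i j k else 0)) := by
  classical
  have hfd : FiniteDimensional ℝ L := Module.Finite.of_basis b
  set S := nhdsWithin (0:ℝ) (Set.Ioi 0) with hSdef
  have hcoord : ∀ k : Fin n, Continuous fun x : L => b.repr x k := by
    intro k
    have := (b.coord k).continuous_of_finiteDimensional
    exact this
  -- inverse on basis vectors
  have hUsymm : ∀ ε : ℝ, 0 < ε → ∀ k, (U ε).symm (b k) = ε ^ (-α k) • b k := by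
    intro ε hε k
    rw [LinearEquiv.symm_apply_eq, map_smul, hU ε hε k, smul_smul,
      ← zpow_add₀ (ne_of_gt hε)]
    simp
  have sum_lie' : ∀ (f : Fin n → L) (m : L), ⁅∑ i, f i, m⁆ = ∑ i, ⁅f i, m⁆ := by
    intro f m
    exact map_sum (AddMonoidHom.mk' (fun x : L => ⁅x, m⁆) fun a b => add_lie a b m) f _
  have lie_sum' : ∀ (m : L) (f : Fin n → L), ⁅m, ∑ i, f i⁆ = ∑ i, ⁅m, f i⁆ := by
    intro m f
    exact map_sum (AddMonoidHom.mk' (fun x : L => ⁅m, x⁆) fun a b => lie_add m a b) f _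
  -- bracket of basis vectors
  have hbk : ∀ i j, ⁅b i, b j⁆ = ∑ k, c i j k • b k := by
    intro i j
    conv_lhs => rw [← b.sum_repr ⁅b i, b j⁆]
    exact Finset.sum_congr rfl fun k _ => by rw [hc]
  -- explicit formula on basis vectors
  have hbasis : ∀ i j, ∀ ε : ℝ, 0 < ε →
      (U ε).symm ⁅U ε (b i), U ε (b j)⁆
        = ∑ k, (ε ^ (α i + α j - α k) * c i j k) • b k := by
    intro i j ε hε
    have hne : (ε : ℝ) ≠ 0 := ne_of_gt hε
    rw [hU ε hε i, hU ε hε j, smul_lie, lie_smul, smul_smul, hbk i j,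
      Finset.smul_sum, map_sum]
    refine Finset.sum_congr rfl fun k _ => ?_
    rw [smul_smul, map_smul, hUsymm ε hε k, smul_smul]
    congr 1
    rw [sub_eq_add_neg, zpow_add₀ hne, zpow_add₀ hne]
    ring
  -- the limit bilinear map on basis vectors
  set d : Fin n → Fin n → Fin n → ℝ :=
    fun i j k => if α i + α j = α k then c i j k else 0 with hd
  set v : Fin n → Fin n → L := fun i j => ∑ k, d i j k • b k with hv
  set μ₀ : L →ₗ[ℝ] L →ₗ[ℝ] L :=
    b.constr ℝ fun i => b.constr ℝ fun j => v i j with hμ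
  have hμb : ∀ i j, μ₀ (b i) (b j) = v i j := by
    intro i j
    rw [hμ, Module.Basis.constr_basis, Module.Basis.constr_basis]
  have hrepr : ∀ i j k, b.repr (μ₀ (b i) (b j)) k = d i j k := by
    intro i j k
    rw [hμb i j, hv]
    exact congrFun (b.repr_sum_self _) k
  -- bilinearity expansion of the contraction map
  have hexpand : ∀ (x y : L) (ε : ℝ),
      (U ε).symm ⁅U ε x, U ε y⁆
        = ∑ i, ∑ j, (b.repr x i * b.repr y j) • (U ε).symm ⁅U ε (b i), U ε (b j)⁆ := by
    intro x y ε
    conv_lhs => rw [← b.sum_repr x, ← b.sum_repr y]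
    simp only [map_sum, map_smul, sum_lie', lie_sum', smul_lie, lie_smul, smul_smul,
      Finset.smul_sum]
    exact Finset.sum_congr rfl fun i _ => Finset.sum_congr rfl fun j _ => by rw [mul_comm]
  have hμexpand : ∀ x y : L, μ₀ x y = ∑ i, ∑ j, (b.repr x i * b.repr y j) • v i j := by
    intro x y
    conv_lhs => rw [← b.sum_repr x, ← b.sum_repr y]
    simp only [map_sum, map_smul, LinearMap.sum_apply, LinearMap.smul_apply, smul_smul,
      Finset.smul_sum]
    rw [Finset.sum_comm]
    exact Finset.sum_congr rfl fun i _ => Finset.sum_congr rfl fun j _ => by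
      rw [mul_comm, hμb]
  -- main existence part
  have main : (∀ i j k, c i j k ≠ 0 → α k ≤ α i + α j) →
      (∀ x y : L, Tendsto (fun ε => (U ε).symm ⁅U ε x, U ε y⁆) S (nhds (μ₀ x y))) ∧
      ((∀ x y : L, μ₀ x y = - μ₀ y x) ∧
       (∀ x y z : L, μ₀ (μ₀ x y) z + μ₀ (μ₀ y z) x + μ₀ (μ₀ z x) y = 0)) := by
    intro hcond
    -- tendsto on basis vectors
    have hbt : ∀ i j, Tendsto (fun ε => (U ε).symm ⁅U ε (b i), U ε (b j)⁆) S (nhds (v i j)) := by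
      intro i j
      have hsum : Tendsto (fun ε : ℝ => ∑ k, (ε ^ (α i + α j - α k) * c i j k) • b k) S
          (nhds (v i j)) := by
        rw [hv]
        refine tendsto_finset_sum _ fun k _ => ?_
        by_cases hck : c i j k = 0
        · simpa [hd, hck] using
            (tendsto_const_nhds : Tendsto (fun _ : ℝ => (0:L)) S (nhds 0))
        · have hle := hcond i j k hck
          have hs := IW_zpow_tendsto_aux (m := α i + α j - α k) (by omega)
          have key := hs.smul_const (c i j k • b k)
          have key' : Tendsto (fun ε : ℝ => (ε ^ (α i + α j - α k) * c i j k) • b k) S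
              (nhds ((if (α i + α j - α k : ℤ) = 0 then (1:ℝ) else 0) • (c i j k • b k))) :=
            key.congr fun ε => by rw [mul_smul]
          have hval : d i j k • b k
              = (if (α i + α j - α k : ℤ) = 0 then (1:ℝ) else 0) • (c i j k • b k) := by
            by_cases h : α i + α j = α k <;> simp [hd, h, sub_eq_zero]
          rw [hval]
          exact key'
      refine hsum.congr' ?_
      filter_upwards [self_mem_nhdsWithin] with ε hε
      exact (hbasis i j ε hε).symm
    -- tendsto in general
    have hT : ∀ x y : L, Tendsto (fun ε => (U ε).symm ⁅U ε x, U ε y⁆) S (nhds (μ₀ x y)) := by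
      intro x y
      have h1 : Tendsto
          (fun ε => ∑ i, ∑ j, (b.repr x i * b.repr y j) • (U ε).symm ⁅U ε (b i), U ε (b j)⁆) S
          (nhds (∑ i, ∑ j, (b.repr x i * b.repr y j) • v i j)) :=
        tendsto_finset_sum _ fun i _ =>
          tendsto_finset_sum _ fun j _ => ((hbt i j).const_smul _)
      rw [hμexpand x y]
      exact h1.congr fun ε => (hexpand x y ε).symm
    refine ⟨hT, ?_, ?_⟩
    · -- antisymmetry
      intro x y
      refine tendsto_nhds_unique (hT x y) (((hT y x).neg).congr fun ε => ?_)
      rw [← map_neg, lie_skew]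
    · -- Jacobi
      have hshift : ∀ (a : ℝ → L) (a₀ : L) (z : L), Tendsto a S (nhds a₀) →
          Tendsto (fun ε => (U ε).symm ⁅U ε (a ε), U ε z⁆) S (nhds (μ₀ a₀ z)) := by
        intro a a₀ z ha
        have h1 : ∀ ε : ℝ, (U ε).symm ⁅U ε (a ε), U ε z⁆
            = ∑ l, (b.repr (a ε) l) • (U ε).symm ⁅U ε (b l), U ε z⁆ := by
          intro ε
          conv_lhs => rw [← b.sum_repr (a ε)]
          simp only [map_sum, map_smul, sum_lie', smul_lie]
        have h2 : μ₀ a₀ z = ∑ l, (b.repr a₀ l) • μ₀ (b l) z := by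
          conv_lhs => rw [← b.sum_repr a₀]
          simp only [map_sum, map_smul, LinearMap.sum_apply, LinearMap.smul_apply]
        rw [h2]
        refine Tendsto.congr (fun ε => (h1 ε).symm) ?_
        refine tendsto_finset_sum _ fun l _ => ?_
        exact Tendsto.smul (((hcoord l).tendsto a₀).comp ha) (hT (b l) z)
      intro x y z
      have h1 := hshift (fun ε => (U ε).symm ⁅U ε x, U ε y⁆) (μ₀ x y) z (hT x y)
      have h2 := hshift (fun ε => (U ε).symm ⁅U ε y, U ε z⁆) (μ₀ y z) x (hT y z)
      have h3 := hshift (fun ε => (U ε).symm ⁅U ε z, U ε x⁆) (μ₀ z x) y (hT z x)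
      have hsum := (h1.add h2).add h3
      have hzero : ∀ ε : ℝ,
          (U ε).symm ⁅U ε ((U ε).symm ⁅U ε x, U ε y⁆), U ε z⁆
            + (U ε).symm ⁅U ε ((U ε).symm ⁅U ε y, U ε z⁆), U ε x⁆
            + (U ε).symm ⁅U ε ((U ε).symm ⁅U ε z, U ε x⁆), U ε y⁆ = 0 := by
        intro ε
        simp only [LinearEquiv.apply_symm_apply]
        rw [← map_add, ← map_add]
        have jac : ⁅⁅U ε x, U ε y⁆, U ε z⁆ + ⁅⁅U ε y, U ε z⁆, U ε x⁆
            + ⁅⁅U ε z, U ε x⁆, U ε y⁆ = 0 := by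
          rw [← lie_skew ⁅U ε x, U ε y⁆ (U ε z), ← lie_skew ⁅U ε y, U ε z⁆ (U ε x),
            ← lie_skew ⁅U ε z, U ε x⁆ (U ε y), ← neg_add, ← neg_add, neg_eq_zero]
          exact lie_jacobi (U ε z) (U ε x) (U ε y)
        rw [jac, map_zero]
      have := tendsto_nhds_unique (hsum.congr fun ε => hzero ε)
        (tendsto_const_nhds : Tendsto (fun _ : ℝ => (0:L)) S (nhds 0))
      exact this
  refine ⟨⟨?_, fun hcond x y => ⟨μ₀ x y, (main hcond).1 x y⟩⟩, fun hcond =>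
    ⟨μ₀, (main hcond).1, (main hcond).2.1, (main hcond).2.2, fun i j k => hrepr i j k⟩⟩
  -- forward direction
  intro hex i j k hck
  by_contra hgt
  push_neg at hgt
  obtain ⟨z, hz⟩ := hex (b i) (b j)
  have hk := ((hcoord k).tendsto z).comp hz
  have heq : (fun ε : ℝ => b.repr ((U ε).symm ⁅U ε (b i), U ε (b j)⁆) k) =ᶠ[S]
      fun ε : ℝ => ε ^ (α i + α j - α k) * c i j k := by
    filter_upwards [self_mem_nhdsWithin] with ε hε
    rw [hbasis i j ε hε]
    exact congrFun (b.repr_sum_self _) k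
  exact IW_no_limit_aux (by omega) hck (hk.congr' heq)
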